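/- arXiv:2002.06422 — 2 statements merged into one kernel-verified Lean document; each statement's English description precedes it below -/
import Mathlib

section
/- Let 0 < λ ≤ Λ, Q = 2d+2, β = Λ(Q−1)/λ + 1, δ > 0 with 2(δ+1) < β, and C > 0. Define u(x) = C(1+ρ(x)^2)^{−δ} on the Heisenberg group, ρ the gauge norm. Then at every point with ρ(x)^2 ≥ 1/(2δ+1) and ρ(x) > 0, one has M^-_{λ,Λ}(D^2_{H^d}u(x)) ≤ −2λ C δ |D_{H^d}ρ|^2 (β − 2(δ+1))/(1+ρ^2)^{δ+1}. -/
open Matrix MeasureTheory Real Set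

noncomputable def pucciPlus (l L : ℝ) {n : ℕ} {M : Matrix (Fin n) (Fin n) ℝ}
    (hM : M.IsHermitian) : ℝ :=
  ∑ i, (L * max (hM.eigenvalues i) 0 + l * min (hM.eigenvalues i) 0)

noncomputable def pucciMinus (l L : ℝ) {n : ℕ} {M : Matrix (Fin n) (Fin n) ℝ}
    (hM : M.IsHermitian) : ℝ :=
  ∑ i, (l * max (hM.eigenvalues i) 0 + L * min (hM.eigenvalues i) 0)

noncomputable def heisVF (d : ℕ) (i : Fin (2*d)) (x : Fin (2*d+1) → ℝ) : Fin (2*d+1) → ℝ :=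
  if _h : (i : ℕ) < d then
    (Pi.single (Fin.castSucc i) 1 : Fin (2*d+1) → ℝ)
      + (2 * x ⟨(i:ℕ) + d, by omega⟩) • (Pi.single (Fin.last (2*d)) 1 : Fin (2*d+1) → ℝ)
  else
    (Pi.single (Fin.castSucc i) 1 : Fin (2*d+1) → ℝ)
      - (2 * x ⟨(i:ℕ) - d, by omega⟩) • (Pi.single (Fin.last (2*d)) 1 : Fin (2*d+1) → ℝ)

noncomputable def hGrad (d : ℕ) (u : (Fin (2*d+1) → ℝ) → ℝ) (x : Fin (2*d+1) → ℝ) :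
    Fin (2*d) → ℝ := fun i => fderiv ℝ u x (heisVF d i x)

noncomputable def hGradSq (d : ℕ) (u : (Fin (2*d+1) → ℝ) → ℝ) (x : Fin (2*d+1) → ℝ) : ℝ :=
  ∑ i : Fin (2*d), (hGrad d u x i) ^ 2

noncomputable def hHess (d : ℕ) (u : (Fin (2*d+1) → ℝ) → ℝ) (x : Fin (2*d+1) → ℝ) :
    Matrix (Fin (2*d)) (Fin (2*d)) ℝ :=
  Matrix.of fun i j =>
    (fderiv ℝ (fun y => hGrad d u y j) x (heisVF d i x)
      + fderiv ℝ (fun y => hGrad d u y i) x (heisVF d j x)) / 2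

lemma hHess_herm (d : ℕ) (u : (Fin (2*d+1) → ℝ) → ℝ) (x : Fin (2*d+1) → ℝ) :
    (hHess d u x).IsHermitian := by
  unfold Matrix.IsHermitian
  ext i j
  simp [hHess, Matrix.conjTranspose_apply, add_comm]

/-- The Koranyi gauge norm on the Heisenberg group `ℍ^d ≃ ℝ^{2d+1}`. -/
noncomputable def hGauge (d : ℕ) (x : Fin (2*d+1) → ℝ) : ℝ :=
  ((∑ i : Fin (2*d), x (Fin.castSucc i) ^ 2) ^ 2 + x (Fin.last (2*d)) ^ 2) ^ (1/4 : ℝ)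


section Aux

noncomputable section

def Sfun (d : ℕ) (y : Fin (2*d+1) → ℝ) : ℝ := ∑ i : Fin (2*d), y (Fin.castSucc i) ^ 2
def Rfun (d : ℕ) (y : Fin (2*d+1) → ℝ) : ℝ := (Sfun d y)^2 + y (Fin.last (2*d))^2

def sig (d : ℕ) (i : Fin (2*d)) : Fin (2*d) :=
  if _h : (i:ℕ) < d then ⟨(i:ℕ)+d, by omega⟩ else ⟨(i:ℕ)-d, by have := i.isLt; omega⟩

def eps (d : ℕ) (i : Fin (2*d)) : ℝ := if (i:ℕ) < d then 1 else -1

def Wfun (d : ℕ) (y : Fin (2*d+1) → ℝ) (i : Fin (2*d)) : ℝ :=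
  Sfun d y * y (Fin.castSucc i) + eps d i * y (Fin.last (2*d)) * y (Fin.castSucc (sig d i))

lemma sig_val (d : ℕ) (i : Fin (2*d)) :
    ((sig d i : Fin (2*d)) : ℕ) = if (i:ℕ) < d then (i:ℕ)+d else (i:ℕ)-d := by
  unfold sig; split_ifs <;> rfl

lemma sig_sig (d : ℕ) (i : Fin (2*d)) : sig d (sig d i) = i := by
  have := i.isLt
  apply Fin.ext
  rw [sig_val, sig_val]
  split_ifs <;> omega

lemma sig_ne (d : ℕ) (i : Fin (2*d)) : sig d i ≠ i := by
  have := i.isLt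
  rw [Fin.ne_iff_vne, sig_val]
  split_ifs <;> omega

lemma eps_sig (d : ℕ) (i : Fin (2*d)) : eps d (sig d i) = - eps d i := by
  have := i.isLt
  unfold eps
  rw [sig_val]
  split_ifs <;> (try norm_num) <;> omega

lemma eps_mul_self (d : ℕ) (i : Fin (2*d)) : eps d i * eps d i = 1 := by
  unfold eps; split_ifs <;> norm_num

lemma sig_eq_iff (d : ℕ) (i j : Fin (2*d)) : i = sig d j ↔ j = sig d i := by
  constructor
  · rintro rfl; rw [sig_sig]
  · rintro rfl; rw [sig_sig]

lemma heisVF_castSucc (d : ℕ) (i j : Fin (2*d)) (x : Fin (2*d+1) → ℝ) :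
    heisVF d i x (Fin.castSucc j) = if j = i then 1 else 0 := by
  unfold heisVF
  have hne : Fin.castSucc j ≠ Fin.last (2*d) := (Fin.castSucc_lt_last j).ne
  split_ifs with h1 <;> simp [Pi.single_apply, hne, Fin.castSucc_inj] <;> tauto

lemma heisVF_last (d : ℕ) (i : Fin (2*d)) (x : Fin (2*d+1) → ℝ) :
    heisVF d i x (Fin.last (2*d)) = eps d i * (2 * x (Fin.castSucc (sig d i))) := by
  have hne : Fin.last (2*d) ≠ Fin.castSucc i := (Fin.castSucc_lt_last i).ne'
  unfold heisVF eps sig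
  split_ifs with h1 <;>
      simp only [Pi.add_apply, Pi.sub_apply, Pi.smul_apply, Pi.single_apply, if_neg hne,
        smul_eq_mul, Fin.castSucc_mk] <;>
      (try simp) <;> (try ring)

def pr (d : ℕ) (k : Fin (2*d+1)) : (Fin (2*d+1) → ℝ) →L[ℝ] ℝ :=
  ContinuousLinearMap.proj k

def sD (d : ℕ) (y : Fin (2*d+1) → ℝ) : (Fin (2*d+1) → ℝ) →L[ℝ] ℝ :=
  ∑ i : Fin (2*d), (2 * y (Fin.castSucc i)) • pr d (Fin.castSucc i)

def dR (d : ℕ) (y : Fin (2*d+1) → ℝ) : (Fin (2*d+1) → ℝ) →L[ℝ] ℝ :=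
  (2 * Sfun d y) • sD d y + (2 * y (Fin.last (2*d))) • pr d (Fin.last (2*d))

lemma hasFDerivAt_coord (d : ℕ) (k : Fin (2*d+1)) (y : Fin (2*d+1) → ℝ) :
    HasFDerivAt (fun z : Fin (2*d+1) → ℝ => z k) (pr d k) y :=
  (pr d k).hasFDerivAt

lemma hasFDerivAt_S (d : ℕ) (y : Fin (2*d+1) → ℝ) :
    HasFDerivAt (Sfun d) (sD d y) y := by
  have h : ∀ i : Fin (2*d), HasFDerivAt (fun z : Fin (2*d+1) → ℝ => z (Fin.castSucc i) ^ 2)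
      ((2 * y (Fin.castSucc i)) • pr d (Fin.castSucc i)) y := by
    intro i
    have h0 := (hasFDerivAt_coord d (Fin.castSucc i) y).mul (hasFDerivAt_coord d (Fin.castSucc i) y)
    have he : (fun z : Fin (2*d+1) → ℝ => z (Fin.castSucc i) ^ 2)
        = fun z : Fin (2*d+1) → ℝ => z (Fin.castSucc i) * z (Fin.castSucc i) := by
      funext z; ring
    rw [he]
    refine h0.congr_fderiv ?_
    ext v
    simp [two_mul]
    ring
  exact HasFDerivAt.fun_sum (fun i _ => h i)

lemma hasFDerivAt_R (d : ℕ) (y : Fin (2*d+1) → ℝ) :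
    HasFDerivAt (Rfun d) (dR d y) y := by
  have h1 := (hasFDerivAt_S d y).mul (hasFDerivAt_S d y)
  have h2 := (hasFDerivAt_coord d (Fin.last (2*d)) y).mul (hasFDerivAt_coord d (Fin.last (2*d)) y)
  have h3 := h1.add h2
  have he : (Rfun d) = fun z => Sfun d z * Sfun d z + z (Fin.last (2*d)) * z (Fin.last (2*d)) := by
    funext z; unfold Rfun; ring
  rw [he]
  refine h3.congr_fderiv ?_
  unfold dR
  ext v
  simp [two_mul]
  ring

lemma sD_apply_heis (d : ℕ) (y : Fin (2*d+1) → ℝ) (i : Fin (2*d)) :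
    sD d y (heisVF d i y) = 2 * y (Fin.castSucc i) := by
  unfold sD
  rw [ContinuousLinearMap.sum_apply]
  simp only [ContinuousLinearMap.smul_apply, pr, ContinuousLinearMap.proj_apply,
    heisVF_castSucc, smul_eq_mul, mul_ite, mul_one, mul_zero]
  simp [Finset.sum_ite_eq']

lemma dR_apply_heis (d : ℕ) (y : Fin (2*d+1) → ℝ) (i : Fin (2*d)) :
    dR d y (heisVF d i y) = 4 * Wfun d y i := by
  unfold dR
  simp only [ContinuousLinearMap.add_apply, ContinuousLinearMap.smul_apply, smul_eq_mul,
    sD_apply_heis, pr, ContinuousLinearMap.proj_apply, heisVF_last]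
  unfold Wfun
  ring

def dW (d : ℕ) (y : Fin (2*d+1) → ℝ) (j : Fin (2*d)) : (Fin (2*d+1) → ℝ) →L[ℝ] ℝ :=
  (Sfun d y • pr d (Fin.castSucc j) + y (Fin.castSucc j) • sD d y)
    + ((eps d j * y (Fin.last (2*d))) • pr d (Fin.castSucc (sig d j))
        + y (Fin.castSucc (sig d j)) • (eps d j • pr d (Fin.last (2*d))))

lemma hasFDerivAt_W (d : ℕ) (y : Fin (2*d+1) → ℝ) (j : Fin (2*d)) :
    HasFDerivAt (fun z => Wfun d z j) (dW d y j) y := by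
  have h1 := (hasFDerivAt_S d y).mul (hasFDerivAt_coord d (Fin.castSucc j) y)
  have h2 := ((hasFDerivAt_coord d (Fin.last (2*d)) y).const_mul (eps d j)).mul
      (hasFDerivAt_coord d (Fin.castSucc (sig d j)) y)
  exact h1.add h2

lemma dW_apply_heis (d : ℕ) (x : Fin (2*d+1) → ℝ) (i j : Fin (2*d)) :
    dW d x j (heisVF d i x)
      = Sfun d x * (if j = i then 1 else 0) + 2 * x (Fin.castSucc j) * x (Fin.castSucc i)
        + eps d j * x (Fin.last (2*d)) * (if sig d j = i then 1 else 0)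
        + 2 * eps d j * eps d i * x (Fin.castSucc (sig d j)) * x (Fin.castSucc (sig d i)) := by
  unfold dW
  simp only [ContinuousLinearMap.add_apply, ContinuousLinearMap.smul_apply, smul_eq_mul,
    sD_apply_heis, pr, ContinuousLinearMap.proj_apply, heisVF_last, heisVF_castSucc]
  ring

def phi1 (C δ r : ℝ) : ℝ :=
  C * (-δ/2) * ((1 + r ^ (1/2:ℝ)) ^ (-δ-1) * r ^ (-1/2:ℝ))

def phi2 (C δ r : ℝ) : ℝ :=
  C * (-δ/2) * (((-δ-1) * (1 + r ^ (1/2:ℝ)) ^ (-δ-2) * ((1/2) * r ^ (-1/2:ℝ))) * r ^ (-1/2:ℝ)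
    + (1 + r ^ (1/2:ℝ)) ^ (-δ-1) * ((-1/2) * r ^ (-3/2:ℝ)))

lemma one_add_rpow_pos {r : ℝ} (hr : 0 < r) : 0 < 1 + r ^ (1/2:ℝ) := by
  have : 0 < r ^ (1/2:ℝ) := Real.rpow_pos_of_pos hr _
  linarith

lemma hasDerivAt_sqrtpart {r : ℝ} (hr : 0 < r) :
    HasDerivAt (fun t : ℝ => 1 + t ^ (1/2:ℝ)) ((1/2) * r ^ (-1/2:ℝ)) r := by
  have h := (Real.hasDerivAt_rpow_const (p := (1/2:ℝ)) (Or.inl hr.ne')).const_add 1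
  refine h.congr_deriv ?_
  norm_num

lemma hasDerivAt_phi (C δ : ℝ) {r : ℝ} (hr : 0 < r) :
    HasDerivAt (fun t : ℝ => C * (1 + t ^ (1/2:ℝ)) ^ (-δ:ℝ)) (phi1 C δ r) r := by
  have hb := one_add_rpow_pos hr
  have h := ((hasDerivAt_sqrtpart hr).rpow_const (p := (-δ:ℝ)) (Or.inl hb.ne')).const_mul C
  refine h.congr_deriv ?_
  unfold phi1
  ring_nf

lemma hasDerivAt_phi1 (C δ : ℝ) {r : ℝ} (hr : 0 < r) :
    HasDerivAt (phi1 C δ) (phi2 C δ r) r := by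
  have hb := one_add_rpow_pos hr
  have h1 : HasDerivAt (fun t : ℝ => (1 + t ^ (1/2:ℝ)) ^ (-δ-1:ℝ))
      ((-δ-1) * (1 + r ^ (1/2:ℝ)) ^ (-δ-2) * ((1/2) * r ^ (-1/2:ℝ))) r := by
    have h := (hasDerivAt_sqrtpart hr).rpow_const (p := (-δ-1:ℝ)) (Or.inl hb.ne')
    convert h using 1
    rw [show (-δ-1-1:ℝ) = -δ-2 by ring]
    ring
  have h2 : HasDerivAt (fun t : ℝ => t ^ (-1/2:ℝ)) ((-1/2) * r ^ (-3/2:ℝ)) r := by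
    have h := Real.hasDerivAt_rpow_const (p := (-1/2:ℝ)) (Or.inl hr.ne')
    convert h using 2
    norm_num
  have h3 := (h1.mul h2).const_mul (C * (-δ/2))
  exact h3

def Bfun (d : ℕ) (x : Fin (2*d+1) → ℝ) (i j : Fin (2*d)) : ℝ :=
  Sfun d x * (if j = i then 1 else 0) + 2 * x (Fin.castSucc j) * x (Fin.castSucc i)
    + eps d j * x (Fin.last (2*d)) * (if sig d j = i then 1 else 0)
    + 2 * eps d j * eps d i * x (Fin.castSucc (sig d j)) * x (Fin.castSucc (sig d i))

lemma continuous_Rfun (d : ℕ) : Continuous (Rfun d) := by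
  unfold Rfun Sfun
  fun_prop

lemma grad_formula (d : ℕ) (C δ : ℝ) (y : Fin (2*d+1) → ℝ) (hy : 0 < Rfun d y) (j : Fin (2*d)) :
    hGrad d (fun z => C * (1 + Rfun d z ^ (1/2:ℝ)) ^ (-δ:ℝ)) y j
      = phi1 C δ (Rfun d y) * (4 * Wfun d y j) := by
  have hu : HasFDerivAt (fun z => C * (1 + Rfun d z ^ (1/2:ℝ)) ^ (-δ:ℝ))
      (phi1 C δ (Rfun d y) • dR d y) y :=
    (hasDerivAt_phi C δ hy).comp_hasFDerivAt y (hasFDerivAt_R d y)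
  unfold hGrad
  rw [hu.fderiv]
  rw [ContinuousLinearMap.smul_apply, dR_apply_heis]
  simp

lemma hess_entry (d : ℕ) (C δ : ℝ) (x : Fin (2*d+1) → ℝ) (hx : 0 < Rfun d x) (i j : Fin (2*d)) :
    fderiv ℝ (fun y => hGrad d (fun z => C * (1 + Rfun d z ^ (1/2:ℝ)) ^ (-δ:ℝ)) y j) x
        (heisVF d i x)
      = 16 * phi2 C δ (Rfun d x) * Wfun d x i * Wfun d x j
        + 4 * phi1 C δ (Rfun d x) * Bfun d x i j := by
  have hev : (fun y => hGrad d (fun z => C * (1 + Rfun d z ^ (1/2:ℝ)) ^ (-δ:ℝ)) y j)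
      =ᶠ[nhds x] (fun y => phi1 C δ (Rfun d y) * (4 * Wfun d y j)) := by
    have hpos : ∀ᶠ y in nhds x, 0 < Rfun d y :=
      ((continuous_Rfun d).tendsto x).eventually (eventually_gt_nhds hx)
    filter_upwards [hpos] with y hy using grad_formula d C δ y hy j
  rw [hev.fderiv_eq]
  have h1 : HasFDerivAt (fun y => phi1 C δ (Rfun d y)) (phi2 C δ (Rfun d x) • dR d x) x :=
    (hasDerivAt_phi1 C δ hx).comp_hasFDerivAt x (hasFDerivAt_R d x)
  have h2 : HasFDerivAt (fun y => 4 * Wfun d y j) ((4:ℝ) • dW d x j) x :=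
    (hasFDerivAt_W d x j).const_mul 4
  have h3 := h1.fun_mul h2
  rw [h3.fderiv]
  simp only [ContinuousLinearMap.add_apply, ContinuousLinearMap.smul_apply, smul_eq_mul,
    dW_apply_heis, dR_apply_heis]
  unfold Bfun
  ring

lemma sig_eq_iff' (d : ℕ) (i j : Fin (2*d)) : sig d j = i ↔ j = sig d i := by
  constructor
  · rintro rfl; rw [sig_sig]
  · rintro rfl; rw [sig_sig]

lemma sum_comp_sig (d : ℕ) (f : Fin (2*d) → ℝ) :
    ∑ i : Fin (2*d), f (sig d i) = ∑ i : Fin (2*d), f i :=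
  Function.Bijective.sum_comp (Function.Involutive.bijective (sig_sig d)) f

lemma sum_sq_sig (d : ℕ) (x : Fin (2*d+1) → ℝ) :
    ∑ i : Fin (2*d), x (Fin.castSucc (sig d i)) ^ 2 = Sfun d x :=
  sum_comp_sig d (fun i => x (Fin.castSucc i) ^ 2)

lemma sum_eps_xx (d : ℕ) (x : Fin (2*d+1) → ℝ) :
    ∑ i : Fin (2*d), eps d i * x (Fin.castSucc i) * x (Fin.castSucc (sig d i)) = 0 := by
  apply Finset.sum_ninvolution (sig d)
  · intro a
    rw [sig_sig, eps_sig]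
    ring
  · intro a _
    exact sig_ne d a
  · intro a; exact Finset.mem_univ _
  · exact sig_sig d

lemma sum_eps_WW (d : ℕ) (x : Fin (2*d+1) → ℝ) :
    ∑ i : Fin (2*d), eps d i * Wfun d x i * Wfun d x (sig d i) = 0 := by
  apply Finset.sum_ninvolution (sig d)
  · intro a
    rw [sig_sig, eps_sig]
    ring
  · intro a _
    exact sig_ne d a
  · intro a; exact Finset.mem_univ _
  · exact sig_sig d

lemma sum_xW (d : ℕ) (x : Fin (2*d+1) → ℝ) :
    ∑ i : Fin (2*d), x (Fin.castSucc i) * Wfun d x i = (Sfun d x)^2 := by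
  have h : ∀ i : Fin (2*d), x (Fin.castSucc i) * Wfun d x i
      = Sfun d x * x (Fin.castSucc i)^2
        + x (Fin.last (2*d)) * (eps d i * x (Fin.castSucc i) * x (Fin.castSucc (sig d i))) := by
    intro i; unfold Wfun; ring
  rw [Finset.sum_congr rfl (fun i _ => h i), Finset.sum_add_distrib, ← Finset.mul_sum,
    ← Finset.mul_sum, sum_eps_xx]
  unfold Sfun
  ring

lemma sum_sigW (d : ℕ) (x : Fin (2*d+1) → ℝ) :
    ∑ i : Fin (2*d), eps d i * x (Fin.castSucc (sig d i)) * Wfun d x i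
      = x (Fin.last (2*d)) * Sfun d x := by
  have h : ∀ i : Fin (2*d), eps d i * x (Fin.castSucc (sig d i)) * Wfun d x i
      = Sfun d x * (eps d i * x (Fin.castSucc i) * x (Fin.castSucc (sig d i)))
        + (eps d i * eps d i) * (x (Fin.last (2*d)) * x (Fin.castSucc (sig d i))^2) := by
    intro i; unfold Wfun; ring
  rw [Finset.sum_congr rfl (fun i _ => h i)]
  rw [Finset.sum_congr rfl (fun i _ => by rw [eps_mul_self d i, one_mul])]
  rw [Finset.sum_add_distrib, ← Finset.mul_sum, sum_eps_xx, ← Finset.mul_sum, sum_sq_sig]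
  ring

lemma sum_W_sq (d : ℕ) (x : Fin (2*d+1) → ℝ) :
    ∑ i : Fin (2*d), (Wfun d x i)^2 = Sfun d x * Rfun d x := by
  have h : ∀ i : Fin (2*d), (Wfun d x i)^2
      = (Sfun d x)^2 * x (Fin.castSucc i)^2
        + (2 * Sfun d x * x (Fin.last (2*d))) * (eps d i * x (Fin.castSucc i) * x (Fin.castSucc (sig d i)))
        + (eps d i * eps d i) * (x (Fin.last (2*d))^2 * x (Fin.castSucc (sig d i))^2) := by
    intro i; unfold Wfun; ring
  rw [Finset.sum_congr rfl (fun i _ => h i)]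
  rw [Finset.sum_congr rfl (fun i _ => by rw [eps_mul_self d i, one_mul])]
  rw [Finset.sum_add_distrib, Finset.sum_add_distrib, ← Finset.mul_sum, ← Finset.mul_sum,
    ← Finset.mul_sum, sum_eps_xx, sum_sq_sig]
  unfold Rfun Sfun
  ring

lemma sum_B1 (d : ℕ) (x : Fin (2*d+1) → ℝ) (i : Fin (2*d)) :
    ∑ j : Fin (2*d), Bfun d x i j * Wfun d x j
      = Sfun d x * Wfun d x i + 2 * x (Fin.castSucc i) * (Sfun d x)^2
        - eps d i * x (Fin.last (2*d)) * Wfun d x (sig d i)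
        + 2 * eps d i * x (Fin.castSucc (sig d i)) * (x (Fin.last (2*d)) * Sfun d x) := by
  have h : ∀ j : Fin (2*d), Bfun d x i j * Wfun d x j
      = Sfun d x * (if j = i then Wfun d x j else 0)
        + 2 * x (Fin.castSucc i) * (x (Fin.castSucc j) * Wfun d x j)
        + x (Fin.last (2*d)) * (if j = sig d i then eps d j * Wfun d x j else 0)
        + 2 * eps d i * x (Fin.castSucc (sig d i))
            * (eps d j * x (Fin.castSucc (sig d j)) * Wfun d x j) := by
    intro j
    unfold Bfun
    simp only [sig_eq_iff' d i]
    split_ifs <;> ring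
  rw [Finset.sum_congr rfl (fun j _ => h j)]
  rw [Finset.sum_add_distrib, Finset.sum_add_distrib, Finset.sum_add_distrib,
    ← Finset.mul_sum, ← Finset.mul_sum, ← Finset.mul_sum, ← Finset.mul_sum,
    Finset.sum_ite_eq' Finset.univ i, Finset.sum_ite_eq' Finset.univ (sig d i),
    sum_xW, sum_sigW]
  simp [eps_sig]
  ring

lemma sum_B2 (d : ℕ) (x : Fin (2*d+1) → ℝ) (i : Fin (2*d)) :
    ∑ j : Fin (2*d), Bfun d x j i * Wfun d x j
      = Sfun d x * Wfun d x i + 2 * x (Fin.castSucc i) * (Sfun d x)^2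
        + eps d i * x (Fin.last (2*d)) * Wfun d x (sig d i)
        + 2 * eps d i * x (Fin.castSucc (sig d i)) * (x (Fin.last (2*d)) * Sfun d x) := by
  have h : ∀ j : Fin (2*d), Bfun d x j i * Wfun d x j
      = Sfun d x * (if j = i then Wfun d x j else 0)
        + 2 * x (Fin.castSucc i) * (x (Fin.castSucc j) * Wfun d x j)
        + eps d i * x (Fin.last (2*d)) * (if j = sig d i then Wfun d x j else 0)
        + 2 * eps d i * x (Fin.castSucc (sig d i))
            * (eps d j * x (Fin.castSucc (sig d j)) * Wfun d x j) := by
    intro j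
    unfold Bfun
    simp only [show (i = j) ↔ (j = i) from eq_comm, show (sig d i = j) ↔ (j = sig d i) from eq_comm]
    split_ifs <;> ring
  rw [Finset.sum_congr rfl (fun j _ => h j)]
  rw [Finset.sum_add_distrib, Finset.sum_add_distrib, Finset.sum_add_distrib,
    ← Finset.mul_sum, ← Finset.mul_sum, ← Finset.mul_sum, ← Finset.mul_sum,
    Finset.sum_ite_eq' Finset.univ i, Finset.sum_ite_eq' Finset.univ (sig d i),
    sum_xW, sum_sigW]
  simp

lemma sum_lin {m : ℕ} (a b : ℝ) (f g : Fin m → ℝ) :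
    ∑ i, (a * f i + b * g i) = a * (∑ i, f i) + b * (∑ i, g i) := by
  rw [Finset.sum_add_distrib, Finset.mul_sum, Finset.mul_sum]

lemma sum_B_diag (d : ℕ) (x : Fin (2*d+1) → ℝ) :
    ∑ i : Fin (2*d), Bfun d x i i = (2*(d:ℝ)+4) * Sfun d x := by
  have h : ∀ i : Fin (2*d), Bfun d x i i
      = Sfun d x + (2 * x (Fin.castSucc i)^2 + 2 * x (Fin.castSucc (sig d i))^2) := by
    intro i
    unfold Bfun
    rw [if_pos rfl, if_neg (sig_ne d i)]
    have he := eps_mul_self d i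
    nlinarith [he]
  rw [Finset.sum_congr rfl (fun i _ => h i), Finset.sum_add_distrib, Finset.sum_add_distrib,
    ← Finset.mul_sum, ← Finset.mul_sum, sum_sq_sig]
  rw [Finset.sum_const, Finset.card_univ, Fintype.card_fin]
  unfold Sfun
  push_cast
  ring

lemma hess_apply (d : ℕ) (C δ : ℝ) (x : Fin (2*d+1) → ℝ) (hx : 0 < Rfun d x) (i j : Fin (2*d)) :
    (hHess d (fun z => C * (1 + Rfun d z ^ (1/2:ℝ)) ^ (-δ:ℝ)) x) i j
      = 16 * phi2 C δ (Rfun d x) * (Wfun d x i * Wfun d x j)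
        + 2 * phi1 C δ (Rfun d x) * (Bfun d x i j + Bfun d x j i) := by
  simp only [hHess, Matrix.of_apply]
  rw [hess_entry d C δ x hx i j, hess_entry d C δ x hx j i]
  ring

lemma trace_hess (d : ℕ) (C δ : ℝ) (x : Fin (2*d+1) → ℝ) (hx : 0 < Rfun d x) :
    (hHess d (fun z => C * (1 + Rfun d z ^ (1/2:ℝ)) ^ (-δ:ℝ)) x).trace
      = 16 * phi2 C δ (Rfun d x) * (Sfun d x * Rfun d x)
        + 4 * phi1 C δ (Rfun d x) * ((2*(d:ℝ)+4) * Sfun d x) := by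
  have h : ∀ i : Fin (2*d), (hHess d (fun z => C * (1 + Rfun d z ^ (1/2:ℝ)) ^ (-δ:ℝ)) x).diag i
      = 16 * phi2 C δ (Rfun d x) * ((Wfun d x i)^2)
        + 4 * phi1 C δ (Rfun d x) * Bfun d x i i := by
    intro i
    simp only [Matrix.diag]
    rw [hess_apply d C δ x hx i i]
    ring
  rw [Matrix.trace, Finset.sum_congr rfl (fun i _ => h i),
    sum_lin (16 * phi2 C δ (Rfun d x)) (4 * phi1 C δ (Rfun d x)), sum_W_sq, sum_B_diag]

lemma quad_hess (d : ℕ) (C δ : ℝ) (x : Fin (2*d+1) → ℝ) (hx : 0 < Rfun d x) :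
    Wfun d x ⬝ᵥ ((hHess d (fun z => C * (1 + Rfun d z ^ (1/2:ℝ)) ^ (-δ:ℝ)) x) *ᵥ Wfun d x)
      = 16 * phi2 C δ (Rfun d x) * (Sfun d x * Rfun d x)^2
        + 12 * phi1 C δ (Rfun d x) * ((Sfun d x)^2 * Rfun d x) := by
  set A := 16 * phi2 C δ (Rfun d x) with hA
  set bb := 2 * phi1 C δ (Rfun d x) with hbb
  have hrow : ∀ i, (∑ j, (hHess d (fun z => C * (1 + Rfun d z ^ (1/2:ℝ)) ^ (-δ:ℝ)) x) i j
        * Wfun d x j)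
      = (A * Wfun d x i) * (Sfun d x * Rfun d x)
        + bb * (2 * (Sfun d x * Wfun d x i) + 4 * (x (Fin.castSucc i) * (Sfun d x)^2)
            + 4 * (eps d i * x (Fin.castSucc (sig d i)) * (x (Fin.last (2*d)) * Sfun d x))) := by
    intro i
    have e1 : ∀ j, (hHess d (fun z => C * (1 + Rfun d z ^ (1/2:ℝ)) ^ (-δ:ℝ)) x) i j * Wfun d x j
        = (A * Wfun d x i) * (Wfun d x j)^2
          + bb * (Bfun d x i j * Wfun d x j + Bfun d x j i * Wfun d x j) := by
      intro j
      rw [hess_apply d C δ x hx i j]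
      ring
    rw [Finset.sum_congr rfl (fun j _ => e1 j), sum_lin, sum_W_sq, Finset.sum_add_distrib,
      sum_B1, sum_B2]
    ring
  have e2 : ∀ i, Wfun d x i
        * (∑ j, (hHess d (fun z => C * (1 + Rfun d z ^ (1/2:ℝ)) ^ (-δ:ℝ)) x) i j * Wfun d x j)
      = (A * (Sfun d x * Rfun d x)) * (Wfun d x i)^2
        + (2 * bb) * ((Sfun d x * (Wfun d x i)^2)
            + 2 * ((Sfun d x)^2 * (x (Fin.castSucc i) * Wfun d x i))
            + 2 * ((x (Fin.last (2*d)) * Sfun d x)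
                * (eps d i * x (Fin.castSucc (sig d i)) * Wfun d x i))) := by
    intro i
    rw [hrow i]
    ring
  show (∑ i, Wfun d x i * ∑ j, _ * Wfun d x j) = _
  rw [Finset.sum_congr rfl (fun i _ => e2 i), sum_lin]
  have h3 : ∑ i : Fin (2*d), (Sfun d x * (Wfun d x i)^2
      + 2 * ((Sfun d x)^2 * (x (Fin.castSucc i) * Wfun d x i))
      + 2 * ((x (Fin.last (2*d)) * Sfun d x)
          * (eps d i * x (Fin.castSucc (sig d i)) * Wfun d x i)))
      = Sfun d x * (Sfun d x * Rfun d x) + 2 * ((Sfun d x)^2 * (Sfun d x)^2)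
        + 2 * ((x (Fin.last (2*d)) * Sfun d x) * (x (Fin.last (2*d)) * Sfun d x)) := by
    rw [Finset.sum_add_distrib, Finset.sum_add_distrib, ← Finset.mul_sum, sum_W_sq,
      ← Finset.mul_sum, ← Finset.mul_sum]
    rw [← Finset.mul_sum, ← Finset.mul_sum, sum_xW, sum_sigW]
  rw [h3, sum_W_sq]
  have hRR : (Sfun d x)^2 + x (Fin.last (2*d))^2 = Rfun d x := rfl
  linear_combination (4 * bb * (Sfun d x)^2) * hRR
lemma trace_eq_sum_eig {n : ℕ} {M : Matrix (Fin n) (Fin n) ℝ} (hM : M.IsHermitian) :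
    M.trace = ∑ i, hM.eigenvalues i := by
  conv_lhs => rw [hM.spectral_theorem, Unitary.conjStarAlgAut_apply]
  rw [Matrix.trace_mul_cycle]
  rw [Unitary.coe_star_mul_self, one_mul, Matrix.trace_diagonal]
  simp

lemma quadform_le {n : ℕ} {M : Matrix (Fin n) (Fin n) ℝ} (hM : M.IsHermitian)
    (v : Fin n → ℝ) :
    v ⬝ᵥ (M *ᵥ v) ≤ (∑ i, max (hM.eigenvalues i) 0) * (v ⬝ᵥ v) := by
  set U : Matrix (Fin n) (Fin n) ℝ := (hM.eigenvectorUnitary : Matrix (Fin n) (Fin n) ℝ) with hU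
  have hstar2 : U * star U = 1 := by rw [hU]; exact Unitary.coe_mul_star_self _
  set y := (star U) *ᵥ v with hy
  have hsU : star U = Uᵀ := by
    rw [Matrix.star_eq_conjTranspose]; ext i j; simp [Matrix.conjTranspose_apply]
  have hUy : v ⬝ᵥ (M *ᵥ v) = ∑ i, hM.eigenvalues i * (y i)^2 := by
    conv_lhs => rw [hM.spectral_theorem, Unitary.conjStarAlgAut_apply]
    rw [← hU, ← mulVec_mulVec, ← mulVec_mulVec, dotProduct_mulVec v U, ← mulVec_transpose,
      ← hsU, ← hy]
    simp [dotProduct, mulVec, Matrix.diagonal, Finset.sum_ite_eq, pow_two]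
    exact Finset.sum_congr rfl fun i _ => by ring
  have hvv : v ⬝ᵥ v = ∑ i, (y i)^2 := by
    have h1 : y ⬝ᵥ y = v ⬝ᵥ v := by
      conv_lhs => rw [hy, dotProduct_mulVec, hsU, ← mulVec_transpose, transpose_transpose,
        ← hsU, mulVec_mulVec, hstar2, one_mulVec]
    rw [← h1]; simp [dotProduct, pow_two]
  rw [hUy, hvv, Finset.sum_mul]
  apply Finset.sum_le_sum
  intro i _
  have h0 : (y i)^2 ≤ ∑ j, (y j)^2 :=
    Finset.single_le_sum (fun j _ => sq_nonneg (y j)) (Finset.mem_univ i)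
  have hsum : (0:ℝ) ≤ ∑ j, (y j)^2 := Finset.sum_nonneg fun j _ => sq_nonneg _
  rcases le_or_gt (hM.eigenvalues i) 0 with h | h
  · have h1 : hM.eigenvalues i * y i ^ 2 ≤ 0 := mul_nonpos_of_nonpos_of_nonneg h (sq_nonneg _)
    have h2 : (0:ℝ) ≤ max (hM.eigenvalues i) 0 * ∑ j, (y j)^2 :=
      mul_nonneg (le_max_right _ _) hsum
    linarith
  · have h1 : hM.eigenvalues i * y i ^ 2 ≤ hM.eigenvalues i * ∑ j, (y j)^2 :=
      mul_le_mul_of_nonneg_left h0 h.le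
    have h2 : hM.eigenvalues i * ∑ j, (y j)^2 ≤ max (hM.eigenvalues i) 0 * ∑ j, (y j)^2 :=
      mul_le_mul_of_nonneg_right (le_max_left _ _) hsum
    linarith

lemma pucciMinus_le {n : ℕ} {M : Matrix (Fin n) (Fin n) ℝ} (hM : M.IsHermitian) {l L t : ℝ}
    (hL : l ≤ L) (ht : t ≤ ∑ i, max (hM.eigenvalues i) 0) :
    pucciMinus l L hM ≤ L * M.trace - (L - l) * t := by
  have heq : pucciMinus l L hM = L * M.trace - (L - l) * ∑ i, max (hM.eigenvalues i) 0 := by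
    rw [trace_eq_sum_eig hM]
    unfold pucciMinus
    rw [Finset.mul_sum, Finset.mul_sum, ← Finset.sum_sub_distrib]
    apply Finset.sum_congr rfl
    intro i _
    have hmm := max_add_min (hM.eigenvalues i) 0
    linear_combination L * hmm
  rw [heq]
  have h2 := mul_le_mul_of_nonneg_left ht (by linarith : (0:ℝ) ≤ L - l)
  linarith

lemma hGradSq_gauge (d : ℕ) (x : Fin (2*d+1) → ℝ) (hx : 0 < Rfun d x) :
    (∑ i : Fin (2*d), (fderiv ℝ (hGauge d) x (heisVF d i x)) ^ 2)
      = Sfun d x * (Rfun d x) ^ (-(1/2) : ℝ) := by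
  have hfd : HasFDerivAt (hGauge d) (((1/4) * (Rfun d x) ^ ((1/4:ℝ)-1)) • dR d x) x := by
    exact (Real.hasDerivAt_rpow_const (p := (1/4:ℝ)) (Or.inl hx.ne')).comp_hasFDerivAt x
      (hasFDerivAt_R d x)
  have hg : ∀ i, fderiv ℝ (hGauge d) x (heisVF d i x)
      = (Rfun d x) ^ ((1/4:ℝ)-1) * Wfun d x i := by
    intro i
    rw [hfd.fderiv, ContinuousLinearMap.smul_apply, dR_apply_heis]
    simp
    ring
  rw [Finset.sum_congr rfl (fun i _ => by rw [hg i,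
    mul_pow])]
  rw [← Finset.mul_sum, sum_W_sq]
  have h1 : ((Rfun d x) ^ ((1/4:ℝ)-1))^2 = (Rfun d x) ^ (-(3/2) : ℝ) := by
    rw [← Real.rpow_natCast ((Rfun d x) ^ ((1/4:ℝ)-1)) 2, ← Real.rpow_mul hx.le]
    norm_num
  rw [h1]
  rw [show Sfun d x * Rfun d x = Rfun d x * Sfun d x from mul_comm _ _, ← mul_assoc]
  rw [show (Rfun d x) ^ (-(3/2):ℝ) * Rfun d x
      = (Rfun d x) ^ (-(3/2):ℝ) * (Rfun d x) ^ (1:ℝ) from by rw [Real.rpow_one]]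
  rw [← Real.rpow_add hx]
  norm_num
  ring


end

end Aux

/-- for `u(x) = C(1+ρ²)^{−δ}` with `2(δ+1) < β = Λ(Q−1)/λ+1`, at points with
`ρ² ≥ 1/(2δ+1)` one has
`M⁻_{λ,Λ}(D²_{ℍ^d}u) ≤ −2λCδ|Dρ|²(β−2(δ+1))/(1+ρ²)^{δ+1}`. -/
theorem counterexample_supersolution (d : ℕ) (hd : 1 ≤ d) (l L δ C : ℝ)
    (hl : 0 < l) (hL : l ≤ L) (hδ : 0 < δ) (hC : 0 < C)
    (β : ℝ) (hβ : β = L * (2*d+1) / l + 1) (h2δ : 2 * (δ + 1) < β)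
    (x : Fin (2*d+1) → ℝ) (hx : 0 < hGauge d x)
    (hx2 : 1 / (2*δ+1) ≤ hGauge d x ^ 2) :
    pucciMinus l L
        (hHess_herm d (fun y => C * (1 + hGauge d y ^ 2) ^ (-δ)) x) ≤
      -(2 * l * C * δ) * hGradSq d (hGauge d) x * (β - 2*(δ+1))
        / (1 + hGauge d x ^ 2) ^ (δ+1) := by
  subst hβ
  have h0R : ∀ y, 0 ≤ Rfun d y := fun y => add_nonneg (sq_nonneg _) (sq_nonneg _)
  have hr : 0 < Rfun d x := by
    rcases (h0R x).lt_or_eq with h | h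
    · exact h
    · exfalso
      have h2 : hGauge d x = 0 := by
        show (Rfun d x) ^ (1/4:ℝ) = 0
        rw [← h, Real.zero_rpow (by norm_num)]
      rw [h2] at hx
      exact lt_irrefl _ hx
  have hsq : ∀ y, hGauge d y ^ 2 = Rfun d y ^ (1/2:ℝ) := by
    intro y
    show ((Rfun d y) ^ (1/4:ℝ)) ^ 2 = _
    rw [← Real.rpow_natCast ((Rfun d y) ^ (1/4:ℝ)) 2, ← Real.rpow_mul (h0R y)]
    norm_num
  have hu : (fun y => C * (1 + hGauge d y ^ 2) ^ (-δ))
      = (fun y => C * (1 + Rfun d y ^ (1/2:ℝ)) ^ (-δ:ℝ)) := by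
    funext y
    rw [hsq y]
  rw [hu]
  have hS0 : 0 ≤ Sfun d x := Finset.sum_nonneg fun i _ => sq_nonneg _
  have hherm := hHess_herm d (fun y => C * (1 + Rfun d y ^ (1/2:ℝ)) ^ (-δ:ℝ)) x
  have hqle : 16 * phi2 C δ (Rfun d x) * (Sfun d x * Rfun d x) + 12 * phi1 C δ (Rfun d x) * Sfun d x
      ≤ ∑ i, max (hherm.eigenvalues i) 0 := by
    have hmaxnn : (0:ℝ) ≤ ∑ i, max (hherm.eigenvalues i) 0 :=
      Finset.sum_nonneg fun i _ => le_max_right _ _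
    rcases hS0.lt_or_eq with hS | hS
    · have hquad := quad_hess d C δ x hr
      have hWW : Wfun d x ⬝ᵥ Wfun d x = Sfun d x * Rfun d x := by
        have h5 : Wfun d x ⬝ᵥ Wfun d x = ∑ i, (Wfun d x i)^2 := by
          simp [dotProduct, pow_two]
        rw [h5, sum_W_sq]
      have hub := quadform_le hherm (Wfun d x)
      rw [hquad, hWW] at hub
      have hSr : 0 < Sfun d x * Rfun d x := mul_pos hS hr
      have h6 : (16 * phi2 C δ (Rfun d x) * (Sfun d x * Rfun d x)
            + 12 * phi1 C δ (Rfun d x) * Sfun d x) * (Sfun d x * Rfun d x)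
          ≤ (∑ i, max (hherm.eigenvalues i) 0) * (Sfun d x * Rfun d x) := by
        calc (16 * phi2 C δ (Rfun d x) * (Sfun d x * Rfun d x)
              + 12 * phi1 C δ (Rfun d x) * Sfun d x) * (Sfun d x * Rfun d x)
            = 16 * phi2 C δ (Rfun d x) * (Sfun d x * Rfun d x)^2
              + 12 * phi1 C δ (Rfun d x) * ((Sfun d x)^2 * Rfun d x) := by ring
        _ ≤ _ := hub
      exact le_of_mul_le_mul_right h6 hSr
    · rw [← hS]
      simpa using hmaxnn
  have hmain := pucciMinus_le hherm hL hqle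
  rw [trace_hess d C δ x hr] at hmain
  refine le_trans hmain ?_
  have hGS : hGradSq d (hGauge d) x = Sfun d x * (Rfun d x) ^ (-(1/2):ℝ) := by
    unfold hGradSq hGrad
    exact hGradSq_gauge d x hr
  rw [hGS, hsq x]
  have ha : 0 < Rfun d x ^ (1/2:ℝ) := Real.rpow_pos_of_pos hr _
  set a := Rfun d x ^ (1/2:ℝ) with hadef
  have hra : Rfun d x = a^2 := by
    rw [hadef, ← Real.rpow_natCast (Rfun d x ^ (1/2:ℝ)) 2, ← Real.rpow_mul hr.le]
    norm_num
  have hP : (0:ℝ) < 1 + a := by linarith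
  set Q := (1 + a) ^ (δ + 1) with hQdef
  have hQ : 0 < Q := Real.rpow_pos_of_pos hP _
  have hrhalfneg : Rfun d x ^ (-(1/2):ℝ) = a⁻¹ := by
    rw [← Real.rpow_neg_one a, hadef, ← Real.rpow_mul hr.le]
    norm_num
  have hPm1 : (1 + a) ^ (-δ-1 : ℝ) = Q⁻¹ := by
    rw [hQdef, ← Real.rpow_neg_one ((1+a) ^ (δ+1:ℝ)), ← Real.rpow_mul hP.le]
    ring_nf
  have hPm2 : (1 + a) ^ (-δ-2 : ℝ) = Q⁻¹ * (1+a)⁻¹ := by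
    rw [show (-δ-2 : ℝ) = (-δ-1) + (-1) by ring, Real.rpow_add hP, hPm1, Real.rpow_neg_one]
  have hr32 : Rfun d x ^ (-(3/2) : ℝ) = (a^3)⁻¹ := by
    rw [Real.rpow_neg hr.le]
    congr 1
    rw [hadef, ← Real.rpow_natCast (Rfun d x ^ (1/2:ℝ)) 3, ← Real.rpow_mul hr.le]
    norm_num
  have hφ1v : phi1 C δ (Rfun d x) = C * (-δ/2) * (Q⁻¹ * a⁻¹) := by
    unfold phi1
    rw [← hadef, hPm1, show ((-1:ℝ)/2) = -(1/2) by norm_num, hrhalfneg]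
  have hφ2v : phi2 C δ (Rfun d x) = C * (-δ/2) * (((-δ-1) * (Q⁻¹ * (1+a)⁻¹) * ((1/2) * a⁻¹)) * a⁻¹
      + Q⁻¹ * ((-1/2) * (a^3)⁻¹)) := by
    unfold phi2
    rw [← hadef, hPm1, hPm2, show ((-1:ℝ)/2) = -(1/2) by norm_num, hrhalfneg,
      show ((-3:ℝ)/2) = -(3/2) by norm_num, hr32]
  rw [hφ1v, hφ2v, hrhalfneg, hra]
  have key : -(2 * l * C * δ) * (Sfun d x * a⁻¹) * (L * (2*(d:ℝ)+1) / l + 1 - 2*(δ+1)) / Q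
      - (L * (16 * (C * (-δ/2) * (((-δ-1) * (Q⁻¹ * (1+a)⁻¹) * ((1/2) * a⁻¹)) * a⁻¹
          + Q⁻¹ * ((-1/2) * (a^3)⁻¹))) * (Sfun d x * a^2)
        + 4 * (C * (-δ/2) * (Q⁻¹ * a⁻¹)) * ((2*(d:ℝ)+4) * Sfun d x))
        - (L - l) * (16 * (C * (-δ/2) * (((-δ-1) * (Q⁻¹ * (1+a)⁻¹) * ((1/2) * a⁻¹)) * a⁻¹
          + Q⁻¹ * ((-1/2) * (a^3)⁻¹))) * (Sfun d x * a^2)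
          + 12 * (C * (-δ/2) * (Q⁻¹ * a⁻¹)) * Sfun d x))
      = 4 * l * C * δ * (δ+1) * Sfun d x / (Q * (1+a) * a) := by
    field_simp
    ring
  have hnn : 0 ≤ 4 * l * C * δ * (δ+1) * Sfun d x / (Q * (1+a) * a) := by positivity
  linarith [key]
end

section
/- Let 0 < λ ≤ Λ, Q = 2d+2, β = Λ(Q−1)/λ + 1, c_1 > 0, c_2 ∈ R, and define z(x) = c_1 log(1+ρ(x))/ρ(x)^{β−2} + c_2 on the Heisenberg group with gauge norm ρ. Then for all x with ρ(x) ≥ R_1 := exp((2β−3)/((β−2)(β−1))) − 1, one has M^-_{λ,Λ}(D^2_{H^d}z(x)) ≥ −λ c_1 (β−2) |D_{H^d}ρ|^2 / ρ(x)^β. -/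
open Matrix MeasureTheory Real Set

noncomputable section LB

variable {d : ℕ}

def LBs (d : ℕ) (y : Fin (2*d+1) → ℝ) : ℝ := ∑ i : Fin (2*d), y (Fin.castSucc i) ^ 2
def LBt (d : ℕ) (y : Fin (2*d+1) → ℝ) : ℝ := y (Fin.last (2*d))
def LBq (d : ℕ) (y : Fin (2*d+1) → ℝ) : ℝ := LBs d y ^ 2 + LBt d y ^ 2

lemma hGauge_def (y : Fin (2*d+1) → ℝ) : hGauge d y = LBq d y ^ (1/4:ℝ) := rfl

def LBw (d : ℕ) (i : Fin (2*d)) (y : Fin (2*d+1) → ℝ) : ℝ :=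
  if _h : (i:ℕ) < d then y ⟨(i:ℕ)+d, by omega⟩ else -(y ⟨(i:ℕ)-d, by omega⟩)

def LBv (d : ℕ) (i : Fin (2*d)) (y : Fin (2*d+1) → ℝ) : ℝ :=
  LBs d y * y (Fin.castSucc i) + LBt d y * LBw d i y

def LBproj (d : ℕ) (k : Fin (2*d+1)) : (Fin (2*d+1) → ℝ) →L[ℝ] ℝ :=
  ContinuousLinearMap.proj k

def LBDs (d : ℕ) (y : Fin (2*d+1) → ℝ) : (Fin (2*d+1) → ℝ) →L[ℝ] ℝ :=
  ∑ i : Fin (2*d), (2 * y (Fin.castSucc i)) • LBproj d (Fin.castSucc i)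

def LBDq (d : ℕ) (y : Fin (2*d+1) → ℝ) : (Fin (2*d+1) → ℝ) →L[ℝ] ℝ :=
  (2 * LBs d y) • LBDs d y + (2 * LBt d y) • LBproj d (Fin.last (2*d))

def LBDr (d : ℕ) (y : Fin (2*d+1) → ℝ) : (Fin (2*d+1) → ℝ) →L[ℝ] ℝ :=
  ((1/4) * LBq d y ^ ((1/4:ℝ)-1)) • LBDq d y

def LBW (d : ℕ) (j : Fin (2*d)) : (Fin (2*d+1) → ℝ) →L[ℝ] ℝ :=
  if _h : (j:ℕ) < d then LBproj d ⟨(j:ℕ)+d, by omega⟩ else -LBproj d ⟨(j:ℕ)-d, by omega⟩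

def LBDv (d : ℕ) (j : Fin (2*d)) (y : Fin (2*d+1) → ℝ) : (Fin (2*d+1) → ℝ) →L[ℝ] ℝ :=
  y (Fin.castSucc j) • LBDs d y + LBs d y • LBproj d (Fin.castSucc j)
    + LBw d j y • LBproj d (Fin.last (2*d)) + LBt d y • LBW d j

lemma hasFDerivAt_LBs (y : Fin (2*d+1) → ℝ) : HasFDerivAt (LBs d) (LBDs d y) y := by
  unfold LBs LBDs
  apply HasFDerivAt.fun_sum
  intro i _
  have h1 : HasFDerivAt (fun y : Fin (2*d+1) → ℝ => y (Fin.castSucc i))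
      (LBproj d (Fin.castSucc i)) y := hasFDerivAt_apply (Fin.castSucc i) y
  have := (hasDerivAt_pow 2 (y (Fin.castSucc i))).comp_hasFDerivAt y h1
  simpa [Function.comp_def] using this

lemma hasFDerivAt_LBt (y : Fin (2*d+1) → ℝ) :
    HasFDerivAt (LBt d) (LBproj d (Fin.last (2*d))) y := hasFDerivAt_apply _ y

lemma hasFDerivAt_LBq (y : Fin (2*d+1) → ℝ) : HasFDerivAt (LBq d) (LBDq d y) y := by
  unfold LBq LBDq
  have h1 := (hasDerivAt_pow 2 (LBs d y)).comp_hasFDerivAt y (hasFDerivAt_LBs y)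
  have h2 := (hasDerivAt_pow 2 (LBt d y)).comp_hasFDerivAt y (hasFDerivAt_LBt (d := d) y)
  have := h1.fun_add h2
  simpa using this

lemma hasFDerivAt_wf (j : Fin (2*d)) (y : Fin (2*d+1) → ℝ) :
    HasFDerivAt (LBw d j) (LBW d j) y := by
  unfold LBw LBW
  split
  · exact hasFDerivAt_apply _ y
  · exact (hasFDerivAt_apply _ y).neg

lemma hasFDerivAt_LBv (j : Fin (2*d)) (y : Fin (2*d+1) → ℝ) :
    HasFDerivAt (LBv d j) (LBDv d j y) y := by
  unfold LBv LBDv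
  have := ((hasFDerivAt_LBs y).fun_mul (hasFDerivAt_apply (Fin.castSucc j) y)).fun_add
    ((hasFDerivAt_LBt y).fun_mul (hasFDerivAt_wf j y))
  refine this.congr_fderiv (Eq.symm ?_)
  unfold LBproj
  abel

lemma LBq_nonneg (y : Fin (2*d+1) → ℝ) : 0 ≤ LBq d y := by unfold LBq; positivity

lemma hasFDerivAt_gauge {y : Fin (2*d+1) → ℝ} (hq : 0 < LBq d y) :
    HasFDerivAt (hGauge d) (LBDr d y) y := by
  have := (hasFDerivAt_LBq y).rpow_const (p := (1/4:ℝ)) (Or.inl hq.ne')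
  exact this

lemma LBgauge_pos {y : Fin (2*d+1) → ℝ} (hq : 0 < LBq d y) : 0 < hGauge d y :=
  Real.rpow_pos_of_pos hq _

lemma LBgauge_pow4 (y : Fin (2*d+1) → ℝ) : hGauge d y ^ (4:ℕ) = LBq d y := by
  rw [hGauge_def, ← Real.rpow_natCast (LBq d y ^ (1/4:ℝ)) 4, ← Real.rpow_mul (LBq_nonneg y)]
  norm_num

lemma LBcoef {y : Fin (2*d+1) → ℝ} (hq : 0 < LBq d y) :
    (1/4) * LBq d y ^ ((1/4:ℝ)-1) = 1 / (4 * hGauge d y ^ 3) := by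
  have h3 : hGauge d y ^ (3:ℕ) = LBq d y ^ (3/4:ℝ) := by
    rw [hGauge_def, ← Real.rpow_natCast (LBq d y ^ (1/4:ℝ)) 3, ← Real.rpow_mul (LBq_nonneg y)]
    norm_num
  rw [h3, show (1/4:ℝ)-1 = -(3/4) by norm_num, Real.rpow_neg (LBq_nonneg y)]
  have : (0:ℝ) < LBq d y ^ (3/4:ℝ) := Real.rpow_pos_of_pos hq _
  field_simp

end LB
section LB2
variable {d : ℕ}

lemma heisVF_eq (i : Fin (2*d)) (y : Fin (2*d+1) → ℝ) :
    heisVF d i y = Pi.single (Fin.castSucc i) (1:ℝ)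
      + (2 * LBw d i y) • (Pi.single (Fin.last (2*d)) 1 : Fin (2*d+1) → ℝ) := by
  unfold heisVF LBw
  split
  · rfl
  · rw [mul_neg, neg_smul, ← sub_eq_add_neg]

lemma heis_apply_cast (i j : Fin (2*d)) (y : Fin (2*d+1) → ℝ) :
    heisVF d i y (Fin.castSucc j) = if j = i then 1 else 0 := by
  rw [heisVF_eq]
  have hne : Fin.castSucc j ≠ Fin.last (2*d) := (Fin.castSucc_lt_last j).ne
  simp [Pi.single_apply, hne, Fin.castSucc_inj]

lemma heis_apply_last (i : Fin (2*d)) (y : Fin (2*d+1) → ℝ) :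
    heisVF d i y (Fin.last (2*d)) = 2 * LBw d i y := by
  rw [heisVF_eq]
  have hne : Fin.last (2*d) ≠ Fin.castSucc i := (Fin.castSucc_lt_last i).ne'
  simp [Pi.single_apply, hne]

lemma LBproj_apply (k : Fin (2*d+1)) (v : Fin (2*d+1) → ℝ) : LBproj d k v = v k := rfl

lemma LBDs_apply_heis (i : Fin (2*d)) (y : Fin (2*d+1) → ℝ) :
    LBDs d y (heisVF d i y) = 2 * y (Fin.castSucc i) := by
  unfold LBDs
  rw [ContinuousLinearMap.sum_apply]
  simp only [ContinuousLinearMap.smul_apply, LBproj_apply, smul_eq_mul, heis_apply_cast,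
    mul_ite, mul_one, mul_zero]
  simp

lemma LBDq_apply_heis (i : Fin (2*d)) (y : Fin (2*d+1) → ℝ) :
    LBDq d y (heisVF d i y) = 4 * LBv d i y := by
  unfold LBDq LBv
  simp only [ContinuousLinearMap.add_apply, ContinuousLinearMap.smul_apply, smul_eq_mul,
    LBDs_apply_heis, LBproj_apply, heis_apply_last]
  ring

lemma LBDr_apply_heis {y : Fin (2*d+1) → ℝ} (hq : 0 < LBq d y) (i : Fin (2*d)) :
    LBDr d y (heisVF d i y) = LBv d i y / hGauge d y ^ 3 := by
  unfold LBDr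
  rw [ContinuousLinearMap.smul_apply, LBcoef hq, smul_eq_mul, LBDq_apply_heis]
  have hr := LBgauge_pos hq
  have h3 : (0:ℝ) < hGauge d y ^ 3 := by positivity
  field_simp

def LBeps (d : ℕ) (i j : Fin (2*d)) : ℝ :=
  if (j:ℕ) < d then (if (i:ℕ) = (j:ℕ)+d then 1 else 0)
  else -(if (i:ℕ)+d = (j:ℕ) then 1 else 0)

lemma LBW_apply_heis (i j : Fin (2*d)) (y : Fin (2*d+1) → ℝ) :
    LBW d j (heisVF d i y) = LBeps d i j := by
  unfold LBW LBeps
  have hj := j.isLt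
  by_cases h : (j:ℕ) < d
  · rw [dif_pos h, if_pos h, LBproj_apply]
    have : (⟨(j:ℕ)+d, by omega⟩ : Fin (2*d+1)) = Fin.castSucc ⟨(j:ℕ)+d, by omega⟩ := rfl
    rw [this, heis_apply_cast]
    simp [Fin.ext_iff, eq_comm]
  · rw [dif_neg h, if_neg h, ContinuousLinearMap.neg_apply, LBproj_apply]
    have : (⟨(j:ℕ)-d, by omega⟩ : Fin (2*d+1)) = Fin.castSucc ⟨(j:ℕ)-d, by omega⟩ := rfl
    rw [this, heis_apply_cast]
    congr 1
    have : ((⟨(j:ℕ)-d, by omega⟩ : Fin (2*d)) = i) ↔ ((i:ℕ)+d = (j:ℕ)) := by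
      rw [Fin.ext_iff]; simp; omega
    simp only [this]

lemma LBeps_skew (i j : Fin (2*d)) : LBeps d i j + LBeps d j i = 0 := by
  have hi := i.isLt
  have hj := j.isLt
  unfold LBeps
  split_ifs <;> norm_num <;> omega

lemma LBDv_apply_heis (i j : Fin (2*d)) (y : Fin (2*d+1) → ℝ) :
    LBDv d j y (heisVF d i y) = y (Fin.castSucc j) * (2 * y (Fin.castSucc i))
      + LBs d y * (if j = i then 1 else 0) + LBw d j y * (2 * LBw d i y)
      + LBt d y * LBeps d i j := by
  unfold LBDv
  simp only [ContinuousLinearMap.add_apply, ContinuousLinearMap.smul_apply, smul_eq_mul,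
    LBDs_apply_heis, LBproj_apply, heis_apply_cast, heis_apply_last, LBW_apply_heis]

end LB2
section LB3
variable {d : ℕ}

def LBe (d : ℕ) (i : Fin (2*d)) : Fin (2*d) :=
  if _h : (i:ℕ) < d then ⟨(i:ℕ)+d, by omega⟩ else ⟨(i:ℕ)-d, by omega⟩

lemma LBe_invol : Function.Involutive (LBe d) := by
  intro i
  have hi := i.isLt
  unfold LBe
  by_cases h : (i:ℕ) < d
  · rw [dif_pos h, dif_neg (by simp)]
    apply Fin.ext; simp
  · rw [dif_neg h, dif_pos (by simp; omega)]
    apply Fin.ext; simp; omega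

lemma LBe_lt (i : Fin (2*d)) : ((LBe d i : Fin (2*d)) : ℕ) < d ↔ ¬ ((i:ℕ) < d) := by
  have hi := i.isLt
  unfold LBe
  by_cases h : (i:ℕ) < d
  · rw [dif_pos h]; simp; omega
  · rw [dif_neg h]; simp; omega

lemma LBw_eq (i : Fin (2*d)) (y : Fin (2*d+1) → ℝ) :
    LBw d i y = (if (i:ℕ) < d then 1 else -1) * y (Fin.castSucc (LBe d i)) := by
  unfold LBw LBe
  by_cases h : (i:ℕ) < d
  · rw [dif_pos h, dif_pos h, if_pos h, one_mul]; rfl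
  · rw [dif_neg h, dif_neg h, if_neg h, neg_one_mul]; rfl

lemma sum_sq_LBw (y : Fin (2*d+1) → ℝ) : ∑ i : Fin (2*d), LBw d i y ^ 2 = LBs d y := by
  have h1 : ∀ i : Fin (2*d), LBw d i y ^ 2 = y (Fin.castSucc (LBe d i)) ^ 2 := by
    intro i; rw [LBw_eq]; split_ifs <;> ring
  rw [Finset.sum_congr rfl fun i _ => h1 i]
  have := Equiv.sum_comp (Function.Involutive.toPerm _ (LBe_invol (d := d)))
    (fun i => y (Fin.castSucc i) ^ 2)
  simpa [LBs, Function.Involutive.coe_toPerm] using this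

lemma sum_x_LBw (y : Fin (2*d+1) → ℝ) :
    ∑ i : Fin (2*d), y (Fin.castSucc i) * LBw d i y = 0 := by
  set f : Fin (2*d) → ℝ := fun i => y (Fin.castSucc i) * LBw d i y with hf
  have hrev : ∀ i, f (LBe d i) = - f i := by
    intro i
    rw [hf]
    simp only
    rw [LBw_eq (LBe d i), LBe_invol i, LBw_eq i]
    by_cases h : (i:ℕ) < d
    · rw [if_pos h, if_neg (by rw [LBe_lt]; omega)]; ring
    · rw [if_neg h, if_pos (by rw [LBe_lt]; omega)]; ring
  have h2 : ∑ i, f i = ∑ i, f (LBe d i) := by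
    have := Equiv.sum_comp (Function.Involutive.toPerm _ (LBe_invol (d := d))) f
    simp only [Function.Involutive.coe_toPerm] at this
    exact this.symm
  have h3 : ∑ i, f (LBe d i) = - ∑ i, f i := by
    rw [Finset.sum_congr rfl fun i _ => hrev i, Finset.sum_neg_distrib]
  have : ∑ i, f i = 0 := by linarith [h2, h3, h2 ▸ h3]
  exact this

lemma sum_sq_LBv (y : Fin (2*d+1) → ℝ) :
    ∑ i : Fin (2*d), LBv d i y ^ 2 = LBs d y * LBq d y := by
  have h1 : ∀ i : Fin (2*d), LBv d i y ^ 2 =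
      LBs d y ^ 2 * (y (Fin.castSucc i) ^ 2)
      + (2 * LBs d y * LBt d y) * (y (Fin.castSucc i) * LBw d i y)
      + LBt d y ^ 2 * (LBw d i y ^ 2) := by
    intro i; unfold LBv; ring
  rw [Finset.sum_congr rfl fun i _ => h1 i]
  rw [Finset.sum_add_distrib, Finset.sum_add_distrib, ← Finset.mul_sum, ← Finset.mul_sum,
    ← Finset.mul_sum, sum_x_LBw, sum_sq_LBw]
  have : ∑ i : Fin (2*d), y (Fin.castSucc i) ^ 2 = LBs d y := rfl
  rw [this]
  unfold LBq
  ring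

end LB3
section LB4

variable {β c1 c2 r : ℝ}

noncomputable def LBphi (β c1 c2 : ℝ) (r : ℝ) : ℝ := c1 * Real.log (1+r) / r^(β-2) + c2

noncomputable def LBphi1 (β c1 : ℝ) (r : ℝ) : ℝ :=
  c1 * (r^(2-β)/(1+r) + (2-β) * r^(1-β) * Real.log (1+r))

noncomputable def LBphi2 (β c1 : ℝ) (r : ℝ) : ℝ :=
  c1 * ((4-2*β) * r^(1-β)/(1+r) - r^(2-β)/(1+r)^2 + (2-β)*(1-β) * r^(-β) * Real.log (1+r))

lemma LBrpow_facts (hr : 0 < r) :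
    r^(2-β) = r^(1-β) * r ∧ r^(β-2) = (r^(1-β) * r)⁻¹ ∧ r^(β-3) = (r^(1-β) * r^2)⁻¹
      ∧ r^(-β) = r^(1-β) / r := by
  have h2 : r^(2-β) = r^(1-β) * r := by
    rw [show (2-β) = (1-β)+1 by ring, Real.rpow_add hr, Real.rpow_one]
  refine ⟨h2, ?_, ?_, ?_⟩
  · rw [show β-2 = -(2-β) by ring, Real.rpow_neg hr.le, h2]
  · rw [show β-3 = -((1-β)+2) by ring, Real.rpow_neg hr.le, Real.rpow_add hr,
      show ((2:ℝ)) = ((2:ℕ):ℝ) by norm_num, Real.rpow_natCast]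
  · rw [show -β = (1-β) + (-1) by ring, Real.rpow_add hr, Real.rpow_neg_one, div_eq_mul_inv]

lemma LBrpow_pos (hr : 0 < r) (p : ℝ) : 0 < r ^ p := Real.rpow_pos_of_pos hr p

lemma hasDerivAt_LBphi (hr : 0 < r) : HasDerivAt (LBphi β c1 c2) (LBphi1 β c1 r) r := by
  have h1r : (0:ℝ) < 1 + r := by linarith
  have hlog : HasDerivAt (fun s : ℝ => Real.log (1+s)) (1/(1+r)) r := by
    have h := ((hasDerivAt_id r).const_add 1).log h1r.ne'
    simpa using h
  have hnum : HasDerivAt (fun s : ℝ => c1 * Real.log (1+s)) (c1 * (1/(1+r))) r :=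
    hlog.const_mul c1
  have hden : HasDerivAt (fun s : ℝ => s^(β-2)) ((β-2) * r^(β-3)) r := by
    have := Real.hasDerivAt_rpow_const (x := r) (p := β-2) (Or.inl hr.ne')
    rwa [show β-2-1 = β-3 by ring] at this
  have hd0 : r^(β-2) ≠ 0 := (LBrpow_pos hr _).ne'
  have h := (hnum.div hden hd0).add_const c2
  refine h.congr_deriv (Eq.symm ?_)
  obtain ⟨e2, em2, em3, em0⟩ := LBrpow_facts (β := β) hr
  unfold LBphi1
  rw [e2, em2, em3]
  have ha : 0 < r^(1-β) := LBrpow_pos hr _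
  field_simp
  ring

lemma hasDerivAt_LBphi1 (hr : 0 < r) : HasDerivAt (LBphi1 β c1) (LBphi2 β c1 r) r := by
  have h1r : (0:ℝ) < 1 + r := by linarith
  have hlog : HasDerivAt (fun s : ℝ => Real.log (1+s)) (1/(1+r)) r := by
    have h := ((hasDerivAt_id r).const_add 1).log h1r.ne'
    simpa using h
  have hA : HasDerivAt (fun s : ℝ => s^(2-β)) ((2-β) * r^(1-β)) r := by
    have := Real.hasDerivAt_rpow_const (x := r) (p := 2-β) (Or.inl hr.ne')
    rwa [show 2-β-1 = 1-β by ring] at this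
  have hden : HasDerivAt (fun s : ℝ => 1 + s) 1 r := (hasDerivAt_id r).const_add 1
  have hB := hA.div hden h1r.ne'
  have hC : HasDerivAt (fun s : ℝ => (2-β) * s^(1-β)) ((2-β) * ((1-β) * r^(-β))) r := by
    have := Real.hasDerivAt_rpow_const (x := r) (p := 1-β) (Or.inl hr.ne')
    rw [show 1-β-1 = -β by ring] at this
    exact this.const_mul (2-β)
  have hD := hC.mul hlog
  have h := (hB.fun_add hD).const_mul c1
  refine h.congr_deriv (Eq.symm ?_)
  unfold LBphi2
  obtain ⟨e2, em2, em3, em0⟩ := LBrpow_facts (β := β) hr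
  rw [e2, em0]
  have ha : 0 < r^(1-β) := LBrpow_pos hr _
  field_simp
  ring

section signs
variable (hβ : 4 ≤ β) (hr : 0 < r) (hc1 : 0 < c1)
  (hlg : (2*β-3)/((β-2)*(β-1)) ≤ Real.log (1+r))
include hβ hr hc1 hlg

lemma LBkey : 2*β-3 ≤ (β-2)*(β-1)*Real.log (1+r) := by
  have hpos : (0:ℝ) < (β-2)*(β-1) := by nlinarith
  rw [div_le_iff₀ hpos] at hlg
  nlinarith [hlg]

lemma LBphi1_eq' : LBphi1 β c1 r
    = c1 * r^(1-β) * (r/(1+r) - (β-2)*Real.log (1+r)) := by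
  unfold LBphi1
  obtain ⟨e2, em2, em3, em0⟩ := LBrpow_facts (β := β) hr
  rw [e2]
  have h1r : (0:ℝ) < 1 + r := by linarith
  field_simp
  ring

lemma LBphi2_eq' : LBphi2 β c1 r
    = c1 * (r^(1-β)/r) * ((β-2)*(β-1)*Real.log (1+r)
        - (2*β-4)*(r/(1+r)) - (r/(1+r))^2) := by
  unfold LBphi2
  obtain ⟨e2, em2, em3, em0⟩ := LBrpow_facts (β := β) hr
  rw [e2, em0]
  have h1r : (0:ℝ) < 1 + r := by linarith
  field_simp
  ring

lemma LBphi1_nonpos : LBphi1 β c1 r ≤ 0 := by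
  rw [LBphi1_eq' hβ hr hc1 hlg]
  have ha : 0 < r^(1-β) := LBrpow_pos hr _
  have h1r : (0:ℝ) < 1 + r := by linarith
  have ht : r/(1+r) < 1 := (div_lt_one h1r).mpr (by linarith)
  have hkey := LBkey hβ hr hc1 hlg
  have hbr : r/(1+r) - (β-2)*Real.log (1+r) ≤ 0 := by
    have hL0 : 0 ≤ Real.log (1+r) := Real.log_nonneg (by linarith)
    nlinarith [hkey, ht, hL0]
  exact mul_nonpos_of_nonneg_of_nonpos (by positivity) hbr

lemma LBphi2_nonneg : 0 ≤ LBphi2 β c1 r := by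
  rw [LBphi2_eq' hβ hr hc1 hlg]
  have ha : 0 < r^(1-β) := LBrpow_pos hr _
  have h1r : (0:ℝ) < 1 + r := by linarith
  have ht : r/(1+r) ≤ 1 := le_of_lt ((div_lt_one h1r).mpr (by linarith))
  have ht0 : 0 ≤ r/(1+r) := by positivity
  have hkey := LBkey hβ hr hc1 hlg
  have hbr : 0 ≤ (β-2)*(β-1)*Real.log (1+r) - (2*β-4)*(r/(1+r)) - (r/(1+r))^2 := by
    nlinarith [hkey, mul_nonneg (show (0:ℝ) ≤ 2*β-4 by linarith) (sub_nonneg.mpr ht),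
      mul_self_nonneg (1 - r/(1+r))]
  positivity

lemma LBscalar_main :
    -(c1*(β-2)/r^β) ≤ LBphi2 β c1 r + (β-1) * LBphi1 β c1 r / r := by
  have ha : 0 < r^(1-β) := LBrpow_pos hr _
  have h1r : (0:ℝ) < 1 + r := by linarith
  have hEq : LBphi2 β c1 r + (β-1) * LBphi1 β c1 r / r
      = c1 * (r^(1-β)/r) * ((3-β)*(r/(1+r)) - (r/(1+r))^2) := by
    rw [LBphi1_eq' hβ hr hc1 hlg, LBphi2_eq' hβ hr hc1 hlg]
    field_simp
    ring
  have hLHS : -(c1*(β-2)/r^β) = c1 * (r^(1-β)/r) * (-(β-2)) := by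
    have hb : r^(-β) = r^(1-β)/r := (LBrpow_facts (β := β) hr).2.2.2
    rw [show -β = -β by rfl] at hb
    have : (r^β)⁻¹ = r^(-β) := (Real.rpow_neg hr.le β).symm
    rw [div_eq_mul_inv, this, hb]
    ring
  rw [hEq, hLHS]
  apply mul_le_mul_of_nonneg_left _ (by positivity)
  have ht : r/(1+r) ≤ 1 := le_of_lt ((div_lt_one h1r).mpr (by linarith))
  have ht0 : 0 ≤ r/(1+r) := by positivity
  nlinarith [mul_nonneg (show (0:ℝ) ≤ β-3 by linarith) (sub_nonneg.mpr ht),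
    mul_self_nonneg (1 - r/(1+r))]

end signs
end LB4
section LB5
variable {d : ℕ} {β c1 c2 : ℝ}

lemma LBcont_q : Continuous (LBq d) := by
  unfold LBq LBs LBt
  fun_prop

lemma LBq_ev {x : Fin (2*d+1) → ℝ} (hq : 0 < LBq d x) : ∀ᶠ y in nhds x, 0 < LBq d y :=
  (isOpen_lt continuous_const LBcont_q).eventually_mem hq

lemma hasFDerivAt_LBz {y : Fin (2*d+1) → ℝ} (hq : 0 < LBq d y) :
    HasFDerivAt (fun y => c1 * Real.log (1 + hGauge d y) / hGauge d y ^ (β-2) + c2)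
      (LBphi1 β c1 (hGauge d y) • LBDr d y) y :=
  (hasDerivAt_LBphi (LBgauge_pos hq)).comp_hasFDerivAt y (hasFDerivAt_gauge hq)

lemma hGrad_LBz {y : Fin (2*d+1) → ℝ} (hq : 0 < LBq d y) (j : Fin (2*d)) :
    hGrad d (fun y => c1 * Real.log (1 + hGauge d y) / hGauge d y ^ (β-2) + c2) y j
      = LBphi1 β c1 (hGauge d y) * (LBv d j y / hGauge d y ^ 3) := by
  unfold hGrad
  rw [(hasFDerivAt_LBz hq).fderiv, ContinuousLinearMap.smul_apply, smul_eq_mul,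
    LBDr_apply_heis hq]

lemma fderiv_hGrad_LBz {x : Fin (2*d+1) → ℝ} (hq : 0 < LBq d x) (i j : Fin (2*d)) :
    fderiv ℝ (fun y =>
        hGrad d (fun y => c1 * Real.log (1 + hGauge d y) / hGauge d y ^ (β-2) + c2) y j)
      x (heisVF d i x)
    = LBphi1 β c1 (hGauge d x) * (LBv d j x *
          ((-((hGauge d x ^ 3)^2)⁻¹ * (3 * hGauge d x ^ 2)) * (LBv d i x / hGauge d x ^ 3))
        + (hGauge d x ^ 3)⁻¹ * (x (Fin.castSucc j) * (2 * x (Fin.castSucc i))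
            + LBs d x * (if j = i then 1 else 0) + LBw d j x * (2 * LBw d i x)
            + LBt d x * LBeps d i j))
      + (LBv d j x * (hGauge d x ^ 3)⁻¹)
          * (LBphi2 β c1 (hGauge d x) * (LBv d i x / hGauge d x ^ 3)) := by
  have hr : 0 < hGauge d x := LBgauge_pos hq
  have hg : HasFDerivAt (hGauge d) (LBDr d x) x := hasFDerivAt_gauge hq
  have hphi1 : HasFDerivAt (fun y => LBphi1 β c1 (hGauge d y))
      (LBphi2 β c1 (hGauge d x) • LBDr d x) x :=
    (hasDerivAt_LBphi1 hr).comp_hasFDerivAt x hg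
  have hpow : HasFDerivAt (fun y => hGauge d y ^ 3)
      ((3 * hGauge d x ^ 2) • LBDr d x) x := by
    have := (hasDerivAt_pow 3 (hGauge d x)).comp_hasFDerivAt x hg
    norm_num at this
    exact this
  have hinvc : HasFDerivAt (fun y => (hGauge d y ^ 3)⁻¹)
      ((-((hGauge d x ^ 3)^2)⁻¹ * (3 * hGauge d x ^ 2)) • LBDr d x) x := by
    have := (hasDerivAt_inv (pow_ne_zero 3 hr.ne')).comp_hasFDerivAt x hpow
    rwa [smul_smul] at this
  have hG : HasFDerivAt (fun y => LBv d j y / hGauge d y ^ 3)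
      (LBv d j x • ((-((hGauge d x ^ 3)^2)⁻¹ * (3 * hGauge d x ^ 2)) • LBDr d x)
        + (hGauge d x ^ 3)⁻¹ • LBDv d j x) x := by
    simp only [div_eq_mul_inv]
    exact (hasFDerivAt_LBv j x).mul hinvc
  have hF : HasFDerivAt
      (fun y => LBphi1 β c1 (hGauge d y) * (LBv d j y / hGauge d y ^ 3))
      (LBphi1 β c1 (hGauge d x) • (LBv d j x • ((-((hGauge d x ^ 3)^2)⁻¹
          * (3 * hGauge d x ^ 2)) • LBDr d x) + (hGauge d x ^ 3)⁻¹ • LBDv d j x)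
        + (LBv d j x / hGauge d x ^ 3) • (LBphi2 β c1 (hGauge d x) • LBDr d x)) x :=
    hphi1.mul hG
  have hev : (fun y =>
      hGrad d (fun y => c1 * Real.log (1 + hGauge d y) / hGauge d y ^ (β-2) + c2) y j)
      =ᶠ[nhds x] (fun y => LBphi1 β c1 (hGauge d y) * (LBv d j y / hGauge d y ^ 3)) :=
    (LBq_ev hq).mono fun y hy => hGrad_LBz hy j
  rw [hev.fderiv_eq, hF.fderiv]
  simp only [ContinuousLinearMap.add_apply, ContinuousLinearMap.smul_apply, smul_eq_mul,
    LBDr_apply_heis hq, LBDv_apply_heis]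
  rw [div_eq_mul_inv (LBv d j x)]

lemma hHess_LBz_eq {x : Fin (2*d+1) → ℝ} (hq : 0 < LBq d x) :
    hHess d (fun y => c1 * Real.log (1 + hGauge d y) / hGauge d y ^ (β-2) + c2) x
    = Matrix.of (fun i j =>
        LBphi2 β c1 (hGauge d x) * LBv d i x * LBv d j x / hGauge d x ^ 6
        + LBphi1 β c1 (hGauge d x) * ((2 * x (Fin.castSucc i) * x (Fin.castSucc j)
            + 2 * LBw d i x * LBw d j x + LBs d x * (if i = j then 1 else 0))
              / hGauge d x ^ 3
          - 3 * LBv d i x * LBv d j x / hGauge d x ^ 7)) := by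
  have hr : 0 < hGauge d x := LBgauge_pos hq
  ext i j
  show (fderiv ℝ (fun y => hGrad d _ y j) x (heisVF d i x)
      + fderiv ℝ (fun y => hGrad d _ y i) x (heisVF d j x)) / 2 = _
  rw [fderiv_hGrad_LBz hq i j, fderiv_hGrad_LBz hq j i]
  have hε : LBeps d j i = - LBeps d i j := by linarith [LBeps_skew (d := d) i j]
  rw [hε]
  have hij : (if j = i then (1:ℝ) else 0) = (if i = j then 1 else 0) := by
    simp [eq_comm]
  rw [hij]
  rw [Matrix.of_apply]
  field_simp
  ring
section LB6
variable {d : ℕ}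

lemma LBquad (a1 a2 a3 a4 : ℝ) (xv wv vv g : Fin (2*d) → ℝ) :
    dotProduct g ((Matrix.of fun i j => a1 * xv i * xv j + a2 * wv i * wv j
      + a3 * (if i = j then (1:ℝ) else 0) + a4 * vv i * vv j) *ᵥ g)
    = a1 * (∑ i, xv i * g i)^2 + a2 * (∑ i, wv i * g i)^2 + a3 * (∑ i, g i^2)
      + a4 * (∑ i, vv i * g i)^2 := by
  classical
  have expand : ∀ i, ((Matrix.of fun i j => a1 * xv i * xv j + a2 * wv i * wv j
      + a3 * (if i = j then (1:ℝ) else 0) + a4 * vv i * vv j) *ᵥ g) i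
      = (a1 * xv i) * (∑ j, xv j * g j) + (a2 * wv i) * (∑ j, wv j * g j) + a3 * g i
        + (a4 * vv i) * (∑ j, vv j * g j) := by
    intro i
    simp only [Matrix.mulVec, dotProduct, Matrix.of_apply]
    have h1 : ∀ j, (a1 * xv i * xv j + a2 * wv i * wv j
        + a3 * (if i = j then (1:ℝ) else 0) + a4 * vv i * vv j) * g j
        = (a1 * xv i) * (xv j * g j) + (a2 * wv i) * (wv j * g j)
          + (if i = j then a3 * g j else 0) + (a4 * vv i) * (vv j * g j) := by
      intro j; split_ifs <;> ring
    rw [Finset.sum_congr rfl fun j _ => h1 j]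
    rw [Finset.sum_add_distrib, Finset.sum_add_distrib, Finset.sum_add_distrib,
      ← Finset.mul_sum, ← Finset.mul_sum, ← Finset.mul_sum, Finset.sum_ite_eq]
    simp
  unfold dotProduct
  rw [Finset.sum_congr rfl fun i _ => by rw [expand i]]
  have h2 : ∀ i, g i * ((a1 * xv i) * (∑ j, xv j * g j) + (a2 * wv i) * (∑ j, wv j * g j)
      + a3 * g i + (a4 * vv i) * (∑ j, vv j * g j))
      = (a1 * (∑ j, xv j * g j)) * (xv i * g i) + (a2 * (∑ j, wv j * g j)) * (wv i * g i)
        + a3 * (g i)^2 + (a4 * (∑ j, vv j * g j)) * (vv i * g i) := by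
    intro i; ring
  rw [Finset.sum_congr rfl fun i _ => h2 i]
  rw [Finset.sum_add_distrib, Finset.sum_add_distrib, Finset.sum_add_distrib,
    ← Finset.mul_sum, ← Finset.mul_sum, ← Finset.mul_sum, ← Finset.mul_sum]
  ring

lemma LBsum_v_mul (y : Fin (2*d+1) → ℝ) (g : Fin (2*d) → ℝ) :
    ∑ i, LBv d i y * g i
      = LBs d y * (∑ i, y (Fin.castSucc i) * g i) + LBt d y * (∑ i, LBw d i y * g i) := by
  rw [Finset.mul_sum, Finset.mul_sum, ← Finset.sum_add_distrib]
  refine Finset.sum_congr rfl fun i _ => ?_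
  unfold LBv; ring

lemma hGradSq_gauge_s16 {x : Fin (2*d+1) → ℝ} (hq : 0 < LBq d x) :
    hGradSq d (hGauge d) x = LBs d x / hGauge d x ^ 2 := by
  have hr : 0 < hGauge d x := LBgauge_pos hq
  unfold hGradSq hGrad
  have h1 : ∀ i : Fin (2*d), fderiv ℝ (hGauge d) x (heisVF d i x)
      = LBv d i x / hGauge d x ^ 3 := fun i => by
    rw [(hasFDerivAt_gauge hq).fderiv, LBDr_apply_heis hq]
  rw [Finset.sum_congr rfl fun i _ => by rw [h1 i]]
  simp only [div_pow]
  rw [← Finset.sum_div, sum_sq_LBv, ← LBgauge_pow4 x]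
  field_simp
end LB6
section LB7
variable {d : ℕ}

lemma LBshape_herm (a1 a2 a3 a4 : ℝ) (xv wv vv : Fin (2*d) → ℝ) :
    (Matrix.of fun i j => a1 * xv i * xv j + a2 * wv i * wv j
      + a3 * (if i = j then (1:ℝ) else 0) + a4 * vv i * vv j).IsHermitian := by
  unfold Matrix.IsHermitian
  ext i j
  simp only [Matrix.conjTranspose_apply, Matrix.of_apply, star_trivial]
  have h : (if j = i then (1:ℝ) else 0) = (if i = j then 1 else 0) := by simp [eq_comm]
  rw [h]; ring

lemma LBshape_trace (a1 a2 a3 a4 : ℝ) (y : Fin (2*d+1) → ℝ) :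
    Matrix.trace (Matrix.of fun i j => a1 * y (Fin.castSucc i) * y (Fin.castSucc j)
      + a2 * LBw d i y * LBw d j y + a3 * (if i = j then (1:ℝ) else 0)
      + a4 * LBv d i y * LBv d j y)
    = a1 * LBs d y + a2 * LBs d y + a3 * (2*(d:ℝ)) + a4 * (LBs d y * LBq d y) := by
  unfold Matrix.trace Matrix.diag
  simp only [Matrix.of_apply, if_pos rfl, if_true]
  have h1 : ∀ i : Fin (2*d), a1 * y (Fin.castSucc i) * y (Fin.castSucc i)
      + a2 * LBw d i y * LBw d i y + a3 * 1 + a4 * LBv d i y * LBv d i y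
      = a1 * (y (Fin.castSucc i))^2 + a2 * (LBw d i y)^2 + a3 + a4 * (LBv d i y)^2 := by
    intro i; ring
  rw [Finset.sum_congr rfl fun i _ => h1 i]
  rw [Finset.sum_add_distrib, Finset.sum_add_distrib, Finset.sum_add_distrib,
    ← Finset.mul_sum, ← Finset.mul_sum, ← Finset.mul_sum, sum_sq_LBw, sum_sq_LBv,
    Finset.sum_const, Finset.card_univ]
  have : ∑ i : Fin (2*d), y (Fin.castSucc i) ^ 2 = LBs d y := rfl
  rw [this]
  simp only [Fintype.card_fin, nsmul_eq_mul]
  push_cast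
  ring

end LB7

lemma psd_diag_nonneg {n : ℕ} {A : Matrix (Fin n) (Fin n) ℝ} (hA : A.PosSemidef) (i : Fin n) :
    0 ≤ A i i := by
  exact hA.diag_nonneg

lemma pucci_minus_lb {n : ℕ} {M N : Matrix (Fin n) (Fin n) ℝ} (hM : M.IsHermitian)
    (hN : N.PosSemidef) (hNM : (N - M).PosSemidef) {l L : ℝ} (hlL : l ≤ L) :
    L * M.trace - (L - l) * N.trace ≤ pucciMinus l L hM := by
  classical
  set U : Matrix (Fin n) (Fin n) ℝ := (hM.eigenvectorUnitary : Matrix (Fin n) (Fin n) ℝ) with hU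
  have hUmem := (hM.eigenvectorUnitary).2
  have hU1 : U * star U = 1 := by
    simpa [U] using Unitary.coe_mul_star_self (hM.eigenvectorUnitary)
  have hdiag : star U * M * U = Matrix.diagonal hM.eigenvalues := by
    have := hM.conjStarAlgAut_star_eigenvectorUnitary
    simpa [U, Function.comp] using this
  have htrM : ∑ i, hM.eigenvalues i = M.trace := by
    have h1 : (star U * M * U).trace = M.trace := by
      rw [Matrix.trace_mul_cycle]; rw [hU1, Matrix.one_mul]
    rw [hdiag] at h1
    simpa [Matrix.trace_diagonal] using h1
  have hNc : (star U * N * U).PosSemidef := by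
    simpa [Matrix.star_eq_conjTranspose] using hN.conjTranspose_mul_mul_same U
  have hNMc : (star U * (N - M) * U).PosSemidef := by
    simpa [Matrix.star_eq_conjTranspose] using hNM.conjTranspose_mul_mul_same U
  have htrN : ∑ i, (star U * N * U) i i = N.trace := by
    have h1 : (star U * N * U).trace = N.trace := by
      rw [Matrix.trace_mul_cycle]; rw [hU1, Matrix.one_mul]
    simpa [Matrix.trace] using h1
  have key : ∀ i, L * hM.eigenvalues i - (L - l) * (star U * N * U) i i ≤
      l * max (hM.eigenvalues i) 0 + L * min (hM.eigenvalues i) 0 := by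
    intro i
    have hnn : 0 ≤ (star U * N * U) i i := psd_diag_nonneg hNc i
    have hge : hM.eigenvalues i ≤ (star U * N * U) i i := by
      have := psd_diag_nonneg hNMc i
      have hexp : (star U * (N - M) * U) i i
          = (star U * N * U) i i - (star U * M * U) i i := by
        simp [Matrix.sub_mul, Matrix.mul_sub]
      rw [hexp, hdiag] at this
      simp [Matrix.diagonal_apply_eq] at this
      linarith
    rcases le_or_gt 0 (hM.eigenvalues i) with h | h
    · rw [max_eq_left h, min_eq_right h]
      nlinarith
    · rw [max_eq_right h.le, min_eq_left h.le]
      nlinarith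
  calc L * M.trace - (L - l) * N.trace
      = ∑ i, (L * hM.eigenvalues i - (L - l) * (star U * N * U) i i) := by
        rw [Finset.sum_sub_distrib, ← Finset.mul_sum, ← Finset.mul_sum, htrM, htrN]
    _ ≤ _ := Finset.sum_le_sum fun i _ => key i


set_option maxHeartbeats 1000000 in
/-- for `z(x) = c₁log(1+ρ)/ρ^{β−2} + c₂` with `β = Λ(Q−1)/λ+1`, at points with
`ρ(x) ≥ R₁ = exp((2β−3)/((β−2)(β−1))) − 1` one has
`M⁻_{λ,Λ}(D²_{ℍ^d}z) ≥ −λc₁(β−2)|Dρ|²/ρ^β`. -/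
theorem log_barrier_subsolution (d : ℕ) (hd : 1 ≤ d) (l L c1 c2 : ℝ)
    (hl : 0 < l) (hL : l ≤ L) (hc1 : 0 < c1)
    (β : ℝ) (hβ : β = L * (2*d+1) / l + 1)
    (x : Fin (2*d+1) → ℝ)
    (hx : Real.exp ((2*β - 3) / ((β-2)*(β-1))) - 1 ≤ hGauge d x) :
    -(l * c1 * (β-2) * hGradSq d (hGauge d) x / hGauge d x ^ β) ≤
      pucciMinus l L
        (hHess_herm d
          (fun y => c1 * Real.log (1 + hGauge d y) / hGauge d y ^ (β-2) + c2) x) := by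
  have hd' : (1:ℝ) ≤ (d:ℝ) := by exact_mod_cast hd
  have hβ4 : 4 ≤ β := by
    have h1 : 3 * l ≤ L * (2*(d:ℝ)+1) := by nlinarith
    have h2 : 3 ≤ L * (2*(d:ℝ)+1) / l := by rw [le_div_iff₀ hl]; linarith
    rw [hβ]; linarith
  have hβ2 : 0 < β - 2 := by linarith
  have hβ1 : 0 < β - 1 := by linarith
  have hexp : 0 < (2*β-3)/((β-2)*(β-1)) := by
    apply div_pos (by linarith) (by positivity)
  have hr0 : 0 < hGauge d x := by
    have h1 := Real.add_one_le_exp ((2*β-3)/((β-2)*(β-1)))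
    linarith [hx]
  have hq : 0 < LBq d x := by
    rcases (LBq_nonneg (d := d) x).lt_or_eq with h | h
    · exact h
    · exfalso
      have h0 : hGauge d x = 0 := by
        rw [hGauge_def, ← h, Real.zero_rpow (by norm_num)]
      linarith
  have hlg : (2*β-3)/((β-2)*(β-1)) ≤ Real.log (1 + hGauge d x) := by
    rw [Real.le_log_iff_exp_le (by linarith)]
    linarith [hx]
  set r := hGauge d x with hrdef
  set s := LBs d x with hsdef
  set t := LBt d x with htdef
  set φ1 := LBphi1 β c1 r with hφ1def
  set φ2 := LBphi2 β c1 r with hφ2def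
  have hφ1 : φ1 ≤ 0 := LBphi1_nonpos hβ4 hr0 hc1 hlg
  have hφ2 : 0 ≤ φ2 := LBphi2_nonneg hβ4 hr0 hc1 hlg
  have hs0 : 0 ≤ s := by rw [hsdef]; unfold LBs; positivity
  have hq4 : r ^ 4 = LBq d x := LBgauge_pow4 x
  have hqd : LBq d x = s^2 + t^2 := rfl
  have hMeq := hHess_LBz_eq (β := β) (c1 := c1) (c2 := c2) hq
  -- the Hessian in standard shape
  have hM2 : hHess d (fun y => c1 * Real.log (1 + hGauge d y) / hGauge d y ^ (β-2) + c2) x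
      = Matrix.of (fun i j => (2*φ1/r^3) * x (Fin.castSucc i) * x (Fin.castSucc j)
          + (2*φ1/r^3) * LBw d i x * LBw d j x + (φ1*s/r^3) * (if i = j then (1:ℝ) else 0)
          + (φ2/r^6 - 3*φ1/r^7) * LBv d i x * LBv d j x) := by
    rw [hMeq]
    ext i j
    simp only [Matrix.of_apply]
    rw [← hrdef, ← hφ1def, ← hφ2def, ← hsdef]
    by_cases hij : i = j
    · simp only [if_pos hij]
      field_simp
      ring
    · simp only [if_neg hij]
      field_simp
      ring
  set N : Matrix (Fin (2*d)) (Fin (2*d)) ℝ :=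
    Matrix.of (fun i j => (0:ℝ) * x (Fin.castSucc i) * x (Fin.castSucc j)
      + (0:ℝ) * LBw d i x * LBw d j x + (0:ℝ) * (if i = j then (1:ℝ) else 0)
      + (φ2/r^6) * LBv d i x * LBv d j x) with hNdef
  have hNpsd : N.PosSemidef := by
    refine Matrix.PosSemidef.of_dotProduct_mulVec_nonneg ?_ ?_
    · exact LBshape_herm _ _ _ _ _ _ _
    · intro g
      rw [star_trivial, LBquad]
      simp only [zero_mul, add_zero, zero_add]
      have : (0:ℝ) ≤ φ2/r^6 := by positivity
      exact mul_nonneg this (sq_nonneg _)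
  have hNMpsd : (N - hHess d
      (fun y => c1 * Real.log (1 + hGauge d y) / hGauge d y ^ (β-2) + c2) x).PosSemidef := by
    rw [hM2]
    have hsub : N - Matrix.of (fun i j => (2*φ1/r^3) * x (Fin.castSucc i) * x (Fin.castSucc j)
          + (2*φ1/r^3) * LBw d i x * LBw d j x + (φ1*s/r^3) * (if i = j then (1:ℝ) else 0)
          + (φ2/r^6 - 3*φ1/r^7) * LBv d i x * LBv d j x)
        = Matrix.of (fun i j => (-(2*φ1)/r^3) * x (Fin.castSucc i) * x (Fin.castSucc j)
          + (-(2*φ1)/r^3) * LBw d i x * LBw d j x + (-(φ1*s)/r^3) * (if i = j then (1:ℝ) else 0)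
          + (3*φ1/r^7) * LBv d i x * LBv d j x) := by
      rw [hNdef]
      ext i j
      simp only [Matrix.sub_apply, Matrix.of_apply]
      by_cases hij : i = j
      · simp only [if_pos hij]; ring
      · simp only [if_neg hij]; ring
    rw [hsub]
    refine Matrix.PosSemidef.of_dotProduct_mulVec_nonneg ?_ ?_
    · exact LBshape_herm _ _ _ _ _ _ _
    · intro g
      rw [star_trivial, LBquad]
      set Sx := ∑ i, x (Fin.castSucc i) * g i with hSx
      set Sw := ∑ i, LBw d i x * g i with hSw
      set Sv := ∑ i, LBv d i x * g i with hSv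
      set Sg := ∑ i, (g i)^2 with hSg
      have hSg0 : 0 ≤ Sg := by rw [hSg]; positivity
      have hvrel : Sv = s * Sx + t * Sw := LBsum_v_mul x g
      have hCS : Sv^2 ≤ (s * LBq d x) * Sg := by
        have h := Finset.sum_mul_sq_le_sq_mul_sq Finset.univ (fun i => LBv d i x) g
        rw [sum_sq_LBv] at h
        exact h
      have hid : Sv^2 + (t*Sx - s*Sw)^2 = (LBq d x)*(Sx^2+Sw^2) := by
        rw [hqd, hvrel]; ring
      have key : 0 ≤ 2*(LBq d x)*(Sx^2+Sw^2) + s*(LBq d x)*Sg - 3*Sv^2 := by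
        nlinarith [hCS, sq_nonneg (t*Sx - s*Sw), hid]
      rw [← hq4] at key
      have hfin : (-(2*φ1)/r^3) * Sx^2 + (-(2*φ1)/r^3) * Sw^2 + (-(φ1*s)/r^3) * Sg
          + (3*φ1/r^7) * Sv^2
          = (-φ1/r^7) * (2*(r^4)*(Sx^2+Sw^2) + s*(r^4)*Sg - 3*Sv^2) := by
        have hrne : r ≠ 0 := hr0.ne'
        field_simp
        ring
      rw [hfin]
      have h7 : (0:ℝ) ≤ -φ1/r^7 := div_nonneg (neg_nonneg.mpr hφ1) (by positivity)
      exact mul_nonneg h7 key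
  -- traces
  have htrM : (hHess d
      (fun y => c1 * Real.log (1 + hGauge d y) / hGauge d y ^ (β-2) + c2) x).trace
      = φ2*s/r^2 + φ1*s*(2*(d:ℝ)+1)/r^3 := by
    rw [hM2, LBshape_trace, ← hq4]
    have hrne : r ≠ 0 := hr0.ne'
    field_simp
    ring
  have htrN : N.trace = φ2*s/r^2 := by
    rw [hNdef, LBshape_trace, ← hq4]
    have hrne : r ≠ 0 := hr0.ne'
    field_simp
    ring
  have hP := pucci_minus_lb
    (hHess_herm d (fun y => c1 * Real.log (1 + hGauge d y) / hGauge d y ^ (β-2) + c2) x)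
    hNpsd hNMpsd hL
  rw [htrM, htrN] at hP
  refine le_trans ?_ hP
  rw [hGradSq_gauge_s16 hq]
  have hLd : L * (2*(d:ℝ)+1) = l*(β-1) := by
    have hlne : l ≠ 0 := hl.ne'
    rw [hβ]; field_simp
    ring
  have hmain := LBscalar_main hβ4 hr0 hc1 hlg
  have hcoef : (0:ℝ) ≤ l * s / r^2 := by positivity
  have hstep := mul_le_mul_of_nonneg_left hmain hcoef
  calc -(l * c1 * (β-2) * (s/r^2) / r ^ β)
      = (l * s / r^2) * (-(c1*(β-2)/r^β)) := by ring
    _ ≤ (l * s / r^2) * (LBphi2 β c1 r + (β-1) * LBphi1 β c1 r / r) := hstep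
    _ = L*(φ2*s/r^2 + φ1*s*(2*(d:ℝ)+1)/r^3) - (L-l)*(φ2*s/r^2) := by
        rw [← hφ1def, ← hφ2def]
        linear_combination (-(s*φ1)/r^3) * hLd
end LB5
end
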